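/- Let L ≥ 2 be an integer and P_s > 0 a real number. Among all pairs (ρ_R, ρ_N) of positive real numbers satisfying the average power constraint ρ_R + (L−1)·ρ_N = L·P_s, the quantity φ_N = 1/(1/ρ_N + 1/ρ_R) attains its maximum value L·P_s/(L + 2·√(L−1)) uniquely at ρ_R* = L·P_s/(1 + √(L−1)) and ρ_N* = L·P_s/(L − 1 + √(L−1)). -/

import Mathlib

/-- Optimality of the GDM power allocation: among all positive pairs `(ρR, ρN)` with
`ρR + (L-1)·ρN = L·Ps`, the quantity `φN = 1/(1/ρN + 1/ρR)` attains its maximum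
`L·Ps/(L + 2√(L-1))` uniquely at `ρR* = L·Ps/(1+√(L-1))` and `ρN* = L·Ps/(L-1+√(L-1))`. -/
theorem gdm_power_allocation_optimal (L : ℕ) (hL : 2 ≤ L) (Ps : ℝ) (hPs : 0 < Ps) :
    let ρR : ℝ := (L : ℝ) * Ps / (1 + Real.sqrt ((L : ℝ) - 1))
    let ρN : ℝ := (L : ℝ) * Ps / ((L : ℝ) - 1 + Real.sqrt ((L : ℝ) - 1))
    (0 < ρR ∧ 0 < ρN ∧ ρR + ((L : ℝ) - 1) * ρN = (L : ℝ) * Ps) ∧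
    1 / (1 / ρN + 1 / ρR) = (L : ℝ) * Ps / ((L : ℝ) + 2 * Real.sqrt ((L : ℝ) - 1)) ∧
    ∀ a b : ℝ, 0 < a → 0 < b → a + ((L : ℝ) - 1) * b = (L : ℝ) * Ps →
      1 / (1 / b + 1 / a) ≤ (L : ℝ) * Ps / ((L : ℝ) + 2 * Real.sqrt ((L : ℝ) - 1)) ∧
      (1 / (1 / b + 1 / a) = (L : ℝ) * Ps / ((L : ℝ) + 2 * Real.sqrt ((L : ℝ) - 1)) →
        a = ρR ∧ b = ρN) := by
  intro ρR ρN
  have hL2 : (2:ℝ) ≤ (L:ℝ) := by exact_mod_cast hL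
  set s := Real.sqrt ((L:ℝ) - 1) with hs_def
  have hs2 : s ^ 2 = (L:ℝ) - 1 := Real.sq_sqrt (by linarith)
  have hs1 : 1 ≤ s := by nlinarith [Real.sqrt_nonneg ((L:ℝ) - 1)]
  have hs0 : 0 < s := by linarith
  have hM : 0 < (L:ℝ) * Ps := mul_pos (by linarith) hPs
  have hd1 : 0 < 1 + s := by linarith
  have hd2 : 0 < (L:ℝ) - 1 + s := by linarith
  have hd3 : 0 < (L:ℝ) + 2 * s := by linarith
  have hρR : 0 < ρR := div_pos hM hd1
  have hρN : 0 < ρN := div_pos hM hd2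
  refine ⟨⟨hρR, hρN, ?_⟩, ?_, ?_⟩
  · show (L:ℝ) * Ps / (1 + s) + ((L:ℝ) - 1) * ((L:ℝ) * Ps / ((L:ℝ) - 1 + s)) = (L:ℝ) * Ps
    field_simp
    nlinarith [hs2, hM]
  · show 1 / (1 / ((L:ℝ) * Ps / ((L:ℝ) - 1 + s)) + 1 / ((L:ℝ) * Ps / (1 + s)))
      = (L:ℝ) * Ps / ((L:ℝ) + 2 * s)
    rw [one_div_div, one_div_div, ← add_div, one_div_div]
    congr 1
    ring
  · intro a b ha hb hab
    have habp : 0 < a + b := by linarith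
    have hkey : 1 / (1 / b + 1 / a) = a * b / (a + b) := by
      field_simp
    constructor
    · rw [hkey, div_le_div_iff₀ habp hd3, ← hab]
      nlinarith [sq_nonneg (a - s * b), hs2, sq_nonneg b]
    · intro heq
      rw [hkey] at heq
      rw [div_eq_div_iff habp.ne' hd3.ne', ← hab] at heq
      have h0 : (a - s * b) ^ 2 = 0 := by nlinarith [hs2, sq_nonneg b, heq]
      have hasb : a = s * b := by
        have := pow_eq_zero_iff (n := 2) (by norm_num) |>.mp h0
        linarith
      have hbval : b = ρN := by
        show b = (L:ℝ) * Ps / ((L:ℝ) - 1 + s)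
        rw [eq_div_iff (ne_of_gt hd2)]
        linear_combination hab - hasb
      have haval : a = ρR := by
        show a = (L:ℝ) * Ps / (1 + s)
        rw [eq_div_iff (ne_of_gt hd1)]
        linear_combination hab + s * hasb + b * hs2
      exact ⟨haval, hbval⟩
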